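/- Let K ⊆ ℝⁿ be a closed convex cone with nonempty interior and K ∩ (−K) = {0}, inducing the partial order x ≤_K y ⟺ y − x ∈ K. Let φ be a continuous semiflow on ℝⁿ with precompact orbits that is strongly monotone with respect to ≤_K: x ≤_K y, x ≠ y, t > 0 imply φ(t,y) − φ(t,x) ∈ int K. Assume that for every totally ordered subset L of ℝⁿ the set of non-convergent points in L is countable. Then the set D of points x ∈ ℝⁿ whose omega-limit set is not a single equilibrium has Lebesgue measure zero, provided D is Lebesgue measurable. -/

import Mathlib

open Filter Topology MeasureTheory

section Aux

open Module

/-- A linear equivalence `ℝ × ℝᵐ ≃ ℝ^{m+1}` sending `(1,0)` to a prescribed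
nonzero vector. -/
lemma exists_linEquiv_one_zero' {m : ℕ} (w : Fin (m+1) → ℝ) (hw : w ≠ 0) :
    ∃ g : (ℝ × (Fin m → ℝ)) ≃ₗ[ℝ] (Fin (m+1) → ℝ), g (1, 0) = w := by
  obtain ⟨W, hW⟩ := Submodule.exists_isCompl (ℝ ∙ w)
  have h1 : finrank ℝ (ℝ ∙ w) = 1 := finrank_span_singleton hw
  have hadd := Submodule.finrank_add_eq_of_isCompl hW
  have hdim : finrank ℝ W = m := by
    rw [h1] at hadd
    have : finrank ℝ (Fin (m+1) → ℝ) = m + 1 := by simp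
    omega
  have e2 : W ≃ₗ[ℝ] (Fin m → ℝ) := LinearEquiv.ofFinrankEq _ _ (by simp [hdim])
  let e1 : ℝ ≃ₗ[ℝ] (ℝ ∙ w) := LinearEquiv.toSpanNonzeroSingleton ℝ _ w hw
  refine ⟨(LinearEquiv.prodCongr e1 e2.symm).trans (Submodule.prodEquivOfIsCompl _ W hW), ?_⟩
  have : e1 1 = ⟨w, Submodule.mem_span_singleton_self w⟩ := by
    apply Subtype.ext; simp [e1]
  simp [this, Submodule.coe_prodEquivOfIsCompl, Submodule.prodEquivOfIsCompl]
  exact add_zero w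

lemma insertNth_decomp' {m : ℕ} (i : Fin (m+1)) (t : ℝ) (y : Fin m → ℝ) :
    Fin.insertNth (α := fun _ => ℝ) i t y
      = Fin.insertNth (α := fun _ => ℝ) i 0 y
        + t • Fin.insertNth (α := fun _ => ℝ) i 1 0 := by
  funext j
  refine i.succAboveCases ?_ ?_ j
  · simp
  · intro k; simp [Pi.single_eq_of_ne (i.succAbove_ne k)]

end Aux

/-- Flat-space case of the main theorem (Hirsch's generic convergence, measure
form): the set of non-convergent points of a strongly monotone semiflow on
`ℝⁿ` (with respect to a solid closed pointed cone) has Lebesgue measure zero,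
provided each totally ordered set meets it in a countable set. -/
theorem nonconvergent_set_measure_zero (n : ℕ)
    (K : Set (Fin n → ℝ)) (hKclosed : IsClosed K) (hKconv : Convex ℝ K)
    (hKcone : ∀ (a : ℝ), 0 ≤ a → ∀ x ∈ K, a • x ∈ K)
    (hKpointed : K ∩ (-K) = {0})
    (hKsolid : (interior K).Nonempty)
    (φ : ℝ → (Fin n → ℝ) → (Fin n → ℝ))
    (hφc : Continuous fun q : ℝ × (Fin n → ℝ) => φ q.1 q.2)
    (hφ0 : ∀ x, φ 0 x = x)
    (hφadd : ∀ s t : ℝ, 0 ≤ s → 0 ≤ t → ∀ x, φ (s + t) x = φ s (φ t x))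
    (hcompact : ∀ z, IsCompact (closure {w | ∃ t : ℝ, 0 ≤ t ∧ φ t z = w}))
    (hmono : ∀ x y : Fin n → ℝ, y - x ∈ K → x ≠ y →
      ∀ t : ℝ, 0 < t → φ t y - φ t x ∈ interior K)
    (ω : (Fin n → ℝ) → Set (Fin n → ℝ))
    (hω : ∀ z, ω z = ⋂ (s : ℝ) (_ : 0 ≤ s), closure {w | ∃ t : ℝ, s ≤ t ∧ φ t z = w})
    (conv : Set (Fin n → ℝ))
    (hconv : conv = {x | ∃ e, (∀ t : ℝ, 0 ≤ t → φ t e = e) ∧ ω x = {e}})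
    (hcountable : ∀ L : Set (Fin n → ℝ),
      (∀ p ∈ L, ∀ q ∈ L, p ≠ q → q - p ∈ K ∨ p - q ∈ K) → (L \ conv).Countable)
    (hmeas : MeasurableSet (convᶜ)) :
    volume (convᶜ) = 0 := by
  cases n with
  | zero =>
    -- the space is a single point, which is a convergent equilibrium
    have hcu : conv = Set.univ := by
      rw [Set.eq_univ_iff_forall]
      intro x
      rw [hconv]
      refine ⟨x, fun t ht => Subsingleton.elim _ _, ?_⟩
      refine Set.eq_singleton_iff_unique_mem.2 ⟨?_, fun w _ => Subsingleton.elim _ _⟩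
      rw [hω]
      exact Set.mem_iInter₂.2 fun s hs =>
        subset_closure ⟨s, le_refl s, Subsingleton.elim _ _⟩
    simp [hcu]
  | succ m =>
    obtain ⟨v, hv⟩ := hKsolid
    have hvK : v ∈ K := interior_subset hv
    set i : Fin (m+1) := 0 with hi
    set u : Fin (m+1) → ℝ := Fin.insertNth (α := fun _ => ℝ) i 1 0 with hu
    have hu0 : u ≠ 0 := by
      intro h
      have := congrFun h i
      simp [hu] at this
    -- the interior vector is nonzero since the cone is pointed
    have hv0 : v ≠ 0 := by
      intro h
      rw [h] at hv
      have hmem : interior K ∈ 𝓝 (0 : Fin (m+1) → ℝ) := isOpen_interior.mem_nhds hv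
      have htend : Tendsto (fun t : ℝ => t • u) (𝓝 0) (𝓝 (0 : Fin (m+1) → ℝ)) := by
        have := (continuous_id.smul (continuous_const (y := u))).tendsto (0 : ℝ)
        have h' : Tendsto (fun t : ℝ => t • u) (𝓝 0) (𝓝 ((0 : ℝ) • u)) := this
        rwa [zero_smul] at h'
      have h2 : ∀ᶠ t : ℝ in 𝓝 0, t • u ∈ K :=
        (htend.eventually hmem).mono fun t ht => interior_subset ht
      obtain ⟨ε, hε, hball⟩ := Metric.eventually_nhds_iff.1 h2
      have hd : ∀ t : ℝ, |t| < ε → t • u ∈ K := by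
        intro t ht
        exact hball (by simpa [Real.dist_eq] using ht)
      have h3 : (ε/2) • u ∈ K := hd _ (by rw [abs_of_pos (by linarith)]; linarith)
      have h4 : (-(ε/2)) • u ∈ K := hd _ (by rw [abs_neg, abs_of_pos (by linarith)]; linarith)
      have h5 : (ε/2) • u ∈ K ∩ (-K) := by
        refine ⟨h3, ?_⟩
        rw [Set.mem_neg, ← neg_smul]
        exact h4
      rw [hKpointed] at h5
      have : (ε/2 : ℝ) = 0 ∨ u = 0 := smul_eq_zero.1 h5
      rcases this with h | h
      · linarith
      · exact hu0 h
    -- each line in direction `v` meets the non-convergent set in a countable set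
    have key : ∀ x : Fin (m+1) → ℝ, ({t : ℝ | x + t • v ∈ convᶜ}).Countable := by
      intro x
      have hchain : ∀ p ∈ Set.range (fun t : ℝ => x + t • v),
          ∀ q ∈ Set.range (fun t : ℝ => x + t • v), p ≠ q → q - p ∈ K ∨ p - q ∈ K := by
        rintro p ⟨a, rfl⟩ q ⟨b, rfl⟩ hpq
        rcases le_total a b with hab | hab
        · left
          have hiden : (x + b • v) - (x + a • v) = (b - a) • v := by module
          rw [hiden]
          exact hKcone _ (by linarith) v hvK
        · right
          have hiden : (x + a • v) - (x + b • v) = (a - b) • v := by module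
          rw [hiden]
          exact hKcone _ (by linarith) v hvK
      have hL := hcountable _ hchain
      have hinj : Function.Injective (fun t : ℝ => x + t • v) := by
        intro a b hab
        exact smul_left_injective ℝ hv0 (add_left_cancel hab)
      refine (hL.preimage hinj).mono ?_
      intro t ht
      exact ⟨⟨t, rfl⟩, ht⟩
    -- a linear automorphism sending `u` to `v`
    obtain ⟨gu, hgu⟩ := exists_linEquiv_one_zero' u hu0
    obtain ⟨gv, hgv⟩ := exists_linEquiv_one_zero' v hv0
    let T : (Fin (m+1) → ℝ) ≃ₗ[ℝ] (Fin (m+1) → ℝ) := gu.symm.trans gv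
    have hTu : T u = v := by
      rw [← hgu, ← hgv]
      simp [T]
    have hTc : Continuous T := T.toLinearMap.continuous_of_finiteDimensional
    set D' : Set (Fin (m+1) → ℝ) := ⇑T ⁻¹' (convᶜ) with hD'def
    have hD' : MeasurableSet D' := hmeas.preimage hTc.measurable
    have himg : ⇑T '' D' = convᶜ := Set.image_preimage_eq _ T.surjective
    -- Fubini: `D'` has countable slices in direction `u`, hence is null
    have hmain : volume D' = 0 := by
      set ν : Measure (Fin m → ℝ) := Measure.pi fun _ => (volume : Measure ℝ) with hν
      let e := MeasurableEquiv.piFinSuccAbove (fun _ : Fin (m+1) => ℝ) i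
      have mp := measurePreserving_piFinSuccAbove (fun _ : Fin (m+1) => (volume : Measure ℝ)) i
      set S : Set (ℝ × (Fin m → ℝ)) := ⇑e.symm ⁻¹' D' with hSdef
      have hS : MeasurableSet S := hD'.preimage e.symm.measurable
      have hpre : ⇑e ⁻¹' S = D' := by
        rw [hSdef, ← Set.preimage_comp]
        simp
      have h1 : volume D' = ((volume : Measure ℝ).prod ν) S := by
        rw [volume_pi, ← hpre]
        exact mp.measure_preimage hS.nullMeasurableSet
      have hswap := (Measure.measurePreserving_swap (μ := ν) (ν := (volume : Measure ℝ)))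
      have h2 : (ν.prod volume) (Prod.swap ⁻¹' S) = ((volume : Measure ℝ).prod ν) S :=
        hswap.measure_preimage hS.nullMeasurableSet
      have h3 : (ν.prod volume) (Prod.swap ⁻¹' S) = 0 := by
        rw [MeasureTheory.Measure.measure_prod_null (hS.preimage measurable_swap)]
        refine Filter.Eventually.of_forall fun y => ?_
        show volume (Prod.mk y ⁻¹' (Prod.swap ⁻¹' S)) = (0 : (Fin m → ℝ) → ENNReal) y
        rw [Pi.zero_apply]
        have hslice : Prod.mk y ⁻¹' (Prod.swap ⁻¹' S) = {t : ℝ | (t, y) ∈ S} := rfl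
        rw [hslice]
        refine Set.Countable.measure_zero ?_ _
        have hset : {t : ℝ | (t, y) ∈ S}
            = {t : ℝ | T (Fin.insertNth (α := fun _ => ℝ) i 0 y) + t • v ∈ convᶜ} := by
          ext t
          have hsymm : e.symm (t, y) = Fin.insertNth (α := fun _ => ℝ) i t y := rfl
          simp only [hSdef, Set.mem_preimage, Set.mem_setOf_eq, hsymm, hD'def]
          rw [insertNth_decomp' i t y, _root_.map_add, _root_.map_smul, hTu]
        rw [hset]
        exact key _
      rw [h1, ← h2, h3]
    have hfin := Measure.addHaar_image_linearMap (volume)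
      (T : (Fin (m+1) → ℝ) →ₗ[ℝ] (Fin (m+1) → ℝ)) D'
    rw [hmain, mul_zero] at hfin
    rw [← himg]
    exact hfin
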